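/- Let L₁ and L₂ be two distinct lines (one-dimensional affine subspaces) in three-dimensional Euclidean space. Then the set of points equidistant from L₁ and L₂, namely {x : dist(x, L₁) = dist(x, L₂)}, has Lebesgue measure zero. -/

import Mathlib

open MeasureTheory Metric Polynomial

local notation "E3" => EuclideanSpace ℝ (Fin 3)
local notation "⟪" x ", " y "⟫" => @inner ℝ _ _ x y




lemma finite_linear {c₀ c₁ : ℝ} (h : c₁ ≠ 0) : {t : ℝ | c₀ + t * c₁ = 0}.Finite := by
  have hp : (C c₀ + X * C c₁ : ℝ[X]) ≠ 0 := by
    intro hzero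
    have h1 := congrArg (fun q : ℝ[X] => q.coeff 1) hzero
    simp [coeff_X_mul] at h1
    exact h h1
  refine (Polynomial.finite_setOf_isRoot hp).subset fun t ht => ?_
  simp only [Set.mem_setOf_eq, IsRoot, eval_add, eval_mul, eval_pow, eval_C, eval_X]; have h2 := ht; simp only [Set.mem_setOf_eq] at h2; linarith

lemma finite_quad {c₀ c₁ c₂ : ℝ} (h : c₂ ≠ 0) :
    {t : ℝ | c₀ + t * c₁ + t ^ 2 * c₂ = 0}.Finite := by
  have hp : (C c₀ + X * C c₁ + X ^ 2 * C c₂ : ℝ[X]) ≠ 0 := by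
    intro hzero
    have h1 := congrArg (fun q : ℝ[X] => q.coeff 2) hzero
    simp [coeff_X_mul, coeff_X_pow] at h1
    exact h h1
  refine (Polynomial.finite_setOf_isRoot hp).subset fun t ht => ?_
  simp only [Set.mem_setOf_eq, IsRoot, eval_add, eval_mul, eval_pow, eval_C, eval_X]; have h2 := ht; simp only [Set.mem_setOf_eq] at h2; linarith




lemma slice_null {S : Set (EuclideanSpace ℝ (Fin 3))} (hS : MeasurableSet S)
    {v : EuclideanSpace ℝ (Fin 3)} (hv : v ≠ 0)
    (hfin : ∀ a : EuclideanSpace ℝ (Fin 3), {t : ℝ | a + t • v ∈ S}.Finite) :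
    volume S = 0 := by
  -- normalize direction
  set w : E3 := ‖v‖⁻¹ • v with hwdef
  have hnv : ‖v‖ ≠ 0 := norm_ne_zero_iff.mpr hv
  have hw : ‖w‖ = 1 := norm_smul_inv_norm hv
  have hfinw : ∀ a : E3, {t : ℝ | a + t • w ∈ S}.Finite := by
    intro a
    have hsub : {t : ℝ | a + t • w ∈ S} ⊆ (fun s : ℝ => ‖v‖ * s) '' {s : ℝ | a + s • v ∈ S} := by
      intro t ht
      refine ⟨‖v‖⁻¹ * t, ?_, by field_simp⟩
      simpa [hwdef, smul_smul, mul_comm] using ht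
    exact ((hfin a).image _).subset hsub
  -- orthonormal basis with first vector w
  obtain ⟨b, hb⟩ : ∃ b : OrthonormalBasis (Fin 3) ℝ E3, b 0 = w := by
    have horth : Orthonormal ℝ (Set.restrict {(0 : Fin 3)} (fun _ : Fin 3 => w)) := by
      refine ⟨fun i => by exact hw, ?_⟩
      intro i j hij
      exact absurd (Subtype.ext ((Set.mem_singleton_iff.mp i.2).trans
        (Set.mem_singleton_iff.mp j.2).symm)) hij
    obtain ⟨b, hb⟩ := horth.exists_orthonormalBasis_extension_of_card_eq
      (by simp [finrank_euclideanSpace])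
    exact ⟨b, hb 0 rfl⟩
  -- transfer along the basis isometry
  have hmp1 : MeasurePreserving b.repr.symm volume volume :=
    b.measurePreserving_repr_symm
  set S₁ : Set (EuclideanSpace ℝ (Fin 3)) := b.repr.symm ⁻¹' S with hS₁def
  have hS₁ : MeasurableSet S₁ := hS.preimage b.repr.symm.continuous.measurable
  have h1 : volume S = volume S₁ := (hmp1.measure_preimage hS.nullMeasurableSet).symm
  have hfin1 : ∀ a : E3, {t : ℝ | a + t • EuclideanSpace.single (0 : Fin 3) (1:ℝ) ∈ S₁}.Finite := by
    intro a
    have : {t : ℝ | a + t • EuclideanSpace.single (0 : Fin 3) (1:ℝ) ∈ S₁}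
        = {t : ℝ | b.repr.symm a + t • w ∈ S} := by
      ext t
      simp only [Set.mem_setOf_eq, hS₁def, Set.mem_preimage, map_add,
        _root_.map_smul, OrthonormalBasis.repr_symm_single, hb]
    rw [this]
    exact hfinw _
  -- now transfer to pi measure
  set ψ := (MeasurableEquiv.toLp 2 (Fin 3 → ℝ)).symm with hψdef
  have hmp2 : MeasurePreserving ψ.symm volume volume :=
    (EuclideanSpace.volume_preserving_symm_measurableEquiv_toLp (Fin 3)).symm
  set S₂ : Set (Fin 3 → ℝ) := ψ.symm ⁻¹' S₁ with hS₂def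
  have hS₂ : MeasurableSet S₂ := hS₁.preimage ψ.symm.measurable
  have h2 : volume S₁ = volume S₂ := (hmp2.measure_preimage hS₁.nullMeasurableSet).symm
  set Φ := MeasurableEquiv.piFinSuccAbove (fun _ : Fin 3 => ℝ) 0 with hΦdef
  have hmp3 : MeasurePreserving Φ.symm volume volume :=
    (volume_preserving_piFinSuccAbove (fun _ : Fin 3 => ℝ) 0).symm
  set S₃ : Set (ℝ × (Fin 2 → ℝ)) := Φ.symm ⁻¹' S₂ with hS₃def
  have hS₃ : MeasurableSet S₃ := hS₂.preimage Φ.symm.measurable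
  have h3 : volume S₂ = volume S₃ := (hmp3.measure_preimage hS₂.nullMeasurableSet).symm
  -- swap coordinates and slice
  set S₄ : Set ((Fin 2 → ℝ) × ℝ) := Prod.swap ⁻¹' S₃ with hS₄def
  have hS₄ : MeasurableSet S₄ := hS₃.preimage measurable_swap
  have h4 : volume S₃ = volume S₄ := by
    rw [Measure.volume_eq_prod, Measure.volume_eq_prod]
    exact ((Measure.measurePreserving_swap).measure_preimage hS₃.nullMeasurableSet).symm
  have key : ∀ (t : ℝ) (y : Fin 2 → ℝ),
      ψ.symm (Φ.symm (t, y)) = ψ.symm (Φ.symm (0, y))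
        + t • EuclideanSpace.single (0 : Fin 3) (1:ℝ) := by
    intro t y
    ext i
    rw [PiLp.add_apply, PiLp.smul_apply]
    simp only [hψdef, hΦdef, MeasurableEquiv.piFinSuccAbove, MeasurableEquiv.symm_symm, MeasurableEquiv.coe_toLp, PiLp.toLp_apply,
      MeasurableEquiv.symm_mk, MeasurableEquiv.coe_mk, Fin.insertNthEquiv,
      Equiv.coe_fn_symm_mk, EuclideanSpace.single_apply, smul_eq_mul]
    induction i using Fin.cases with
    | zero => simp
    | succ j => simp [Fin.succ_ne_zero]
  have h5 : volume S₄ = 0 := by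
    rw [Measure.volume_eq_prod, Measure.measure_prod_null hS₄]
    refine Filter.Eventually.of_forall fun y => ?_
    have hset : (Prod.mk y ⁻¹' S₄ : Set ℝ)
        = {t : ℝ | ψ.symm (Φ.symm (0, y))
            + t • EuclideanSpace.single (0 : Fin 3) (1:ℝ) ∈ S₁} := by
      ext t
      simp only [Set.mem_preimage, hS₄def, hS₃def, hS₂def, Set.mem_setOf_eq, Prod.swap_prod_mk,
        ← key t y]
    show (volume : Measure ℝ) (Prod.mk y ⁻¹' S₄) = 0
    rw [hset]
    exact (hfin1 _).measure_zero _
  rw [h1, h2, h3, h4, h5]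




lemma line_param (L : AffineSubspace ℝ (EuclideanSpace ℝ (Fin 3)))
    (h : Module.finrank ℝ L.direction = 1) :
    ∃ (p u : EuclideanSpace ℝ (Fin 3)), ‖u‖ = 1 ∧ p ∈ L ∧
      L.direction = Submodule.span ℝ {u} ∧
      (L : Set (EuclideanSpace ℝ (Fin 3))) = {y | ∃ t : ℝ, y = p + t • u} := by
  have hbot : L.direction ≠ ⊥ := by
    intro hb
    rw [hb] at h
    simp at h
  obtain ⟨v, hvL, hv⟩ := Submodule.exists_mem_ne_zero_of_ne_bot hbot
  have hnv : ‖v‖ ≠ 0 := norm_ne_zero_iff.mpr hv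
  set u : E3 := ‖v‖⁻¹ • v with hudef
  have hu : ‖u‖ = 1 := norm_smul_inv_norm hv
  have hspanv : L.direction = Submodule.span ℝ {v} := by
    refine (Submodule.eq_of_le_of_finrank_eq ?_ ?_).symm
    · rw [Submodule.span_le, Set.singleton_subset_iff]; exact hvL
    · rw [finrank_span_singleton hv, h]
  have hspan : L.direction = Submodule.span ℝ {u} := by
    rw [hspanv, hudef]
    exact (Submodule.span_singleton_smul_eq (IsUnit.mk0 _ (inv_ne_zero hnv)) v).symm
  have hL : L ≠ ⊥ := by
    intro hb
    rw [hb, AffineSubspace.direction_bot] at hbot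
    exact hbot rfl
  obtain ⟨p, hp⟩ := (AffineSubspace.nonempty_iff_ne_bot L).mpr hL
  refine ⟨p, u, hu, hp, hspan, ?_⟩
  ext x
  simp only [SetLike.mem_coe, Set.mem_setOf_eq]
  rw [← AffineSubspace.vsub_right_mem_direction_iff_mem hp, hspan,
    Submodule.mem_span_singleton]
  constructor
  · rintro ⟨t, ht⟩
    exact ⟨t, by rw [ht, vsub_eq_sub]; abel⟩
  · rintro ⟨t, rfl⟩
    exact ⟨t, by simp [vsub_eq_sub]⟩

lemma infDist_sq_line (p u : EuclideanSpace ℝ (Fin 3)) (hu : ‖u‖ = 1)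
    (s : Set (EuclideanSpace ℝ (Fin 3)))
    (hs : s = {y | ∃ t : ℝ, y = p + t • u}) (x : EuclideanSpace ℝ (Fin 3)) :
    infDist x s ^ 2 = ‖x - p‖ ^ 2 - ⟪x - p, u⟫ ^ 2 := by
  subst hs
  set t₀ : ℝ := ⟪x - p, u⟫ with ht₀
  have hd : ∀ t : ℝ, dist x (p + t • u) ^ 2 = ‖x - p‖ ^ 2 - 2 * t * t₀ + t ^ 2 := by
    intro t
    rw [dist_eq_norm, show x - (p + t • u) = (x - p) - t • u from by abel,
      norm_sub_sq_real, real_inner_smul_right, norm_smul, mul_pow, hu,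
      Real.norm_eq_abs, sq_abs]
    ring
  have hmem : p + t₀ • u ∈ {y : E3 | ∃ t : ℝ, y = p + t • u} := ⟨t₀, rfl⟩
  have hne : ({y : E3 | ∃ t : ℝ, y = p + t • u}).Nonempty := ⟨_, hmem⟩
  have heq : infDist x {y : E3 | ∃ t : ℝ, y = p + t • u} = dist x (p + t₀ • u) := by
    refine le_antisymm (infDist_le_dist_of_mem hmem) ?_
    rw [infDist_eq_iInf]
    have : Nonempty ↥{y : E3 | ∃ t : ℝ, y = p + t • u} := hne.to_subtype
    refine le_ciInf fun z => ?_
    obtain ⟨y, t, rfl⟩ := z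
    have h1 : dist x (p + t₀ • u) ^ 2 ≤ dist x (p + t • u) ^ 2 := by
      rw [hd, hd]; nlinarith [sq_nonneg (t - t₀)]
    calc dist x (p + t₀ • u) = Real.sqrt (dist x (p + t₀ • u) ^ 2) :=
          (Real.sqrt_sq dist_nonneg).symm
      _ ≤ Real.sqrt (dist x (p + t • u) ^ 2) := Real.sqrt_le_sqrt h1
      _ = dist x (p + t • u) := Real.sqrt_sq dist_nonneg
  rw [heq, hd t₀]
  ring

lemma g_expand (p₁ u₁ p₂ u₂ a v : EuclideanSpace ℝ (Fin 3)) (t : ℝ) :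
    (‖(a + t • v) - p₁‖ ^ 2 - ⟪(a + t • v) - p₁, u₁⟫ ^ 2)
      - (‖(a + t • v) - p₂‖ ^ 2 - ⟪(a + t • v) - p₂, u₂⟫ ^ 2)
    = ((‖a - p₁‖ ^ 2 - ⟪a - p₁, u₁⟫ ^ 2) - (‖a - p₂‖ ^ 2 - ⟪a - p₂, u₂⟫ ^ 2))
      + t * (2 * ⟪a - p₁, v⟫ - 2 * ⟪a - p₂, v⟫
          - 2 * ⟪a - p₁, u₁⟫ * ⟪v, u₁⟫ + 2 * ⟪a - p₂, u₂⟫ * ⟪v, u₂⟫)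
      + t ^ 2 * (⟪v, u₂⟫ ^ 2 - ⟪v, u₁⟫ ^ 2) := by
  rw [show a + t • v - p₁ = (a - p₁) + t • v from by abel,
    show a + t • v - p₂ = (a - p₂) + t • v from by abel]
  simp only [norm_add_sq_real, inner_add_left, real_inner_smul_left,
    real_inner_smul_right, norm_smul, mul_pow, Real.norm_eq_abs, sq_abs]
  ring

/-- The set of points of Euclidean 3-space equidistant from two distinct
lines (one-dimensional affine subspaces) has Lebesgue measure zero. -/
theorem volume_equidistant_set_of_two_lines
    (L₁ L₂ : AffineSubspace ℝ (EuclideanSpace ℝ (Fin 3)))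
    (h₁ : Module.finrank ℝ L₁.direction = 1)
    (h₂ : Module.finrank ℝ L₂.direction = 1)
    (hne : L₁ ≠ L₂) :
    volume {x : EuclideanSpace ℝ (Fin 3) |
      Metric.infDist x (L₁ : Set (EuclideanSpace ℝ (Fin 3)))
        = Metric.infDist x (L₂ : Set (EuclideanSpace ℝ (Fin 3)))} = 0 := by
  obtain ⟨p₁, u₁, hu₁, hp₁, hdir₁, hset₁⟩ := line_param L₁ h₁
  obtain ⟨p₂, u₂, hu₂, hp₂, hdir₂, hset₂⟩ := line_param L₂ h₂
  have hu₁ne : u₁ ≠ 0 := fun h => by simp [h] at hu₁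
  have hu₂ne : u₂ ≠ 0 := fun h => by simp [h] at hu₂
  set S : Set E3 := {x : E3 | infDist x (L₁ : Set E3) = infDist x (L₂ : Set E3)} with hSdef
  have hSmeas : MeasurableSet S :=
    (isClosed_eq (continuous_infDist_pt _) (continuous_infDist_pt _)).measurableSet
  have hgzero : ∀ x ∈ S,
      (‖x - p₁‖ ^ 2 - ⟪x - p₁, u₁⟫ ^ 2) - (‖x - p₂‖ ^ 2 - ⟪x - p₂, u₂⟫ ^ 2) = 0 := by
    intro x hx
    have hx' : infDist x (L₁ : Set E3) = infDist x (L₂ : Set E3) := hx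
    rw [← infDist_sq_line p₁ u₁ hu₁ _ hset₁ x, ← infDist_sq_line p₂ u₂ hu₂ _ hset₂ x, hx']
    ring
  show volume S = 0
  by_cases hdir : L₁.direction = L₂.direction
  · -- parallel case
    obtain ⟨c, hc⟩ : ∃ c : ℝ, c • u₁ = u₂ := by
      rw [← Submodule.mem_span_singleton, ← hdir₁, hdir, hdir₂]
      exact Submodule.mem_span_singleton_self u₂
    set w : E3 := (p₂ - p₁) - ⟪p₂ - p₁, u₁⟫ • u₁ with hwdef
    have hwu₁ : ⟪w, u₁⟫ = 0 := by
      rw [hwdef, inner_sub_left, real_inner_smul_left, real_inner_self_eq_norm_sq, hu₁]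
      ring
    have hwu₂ : ⟪w, u₂⟫ = 0 := by
      rw [← hc, real_inner_smul_right, hwu₁, mul_zero]
    by_cases hw : w = 0
    · exfalso
      apply hne
      have h0 : p₂ - p₁ = ⟪p₂ - p₁, u₁⟫ • u₁ := by
        rw [← sub_eq_zero]; exact hw
      have hmem : p₂ ∈ L₁ := by
        rw [← AffineSubspace.vsub_right_mem_direction_iff_mem hp₁ p₂, hdir₁]
        rw [show p₂ -ᵥ p₁ = p₂ - p₁ from rfl, h0]
        exact Submodule.mem_span_singleton.mpr ⟨_, rfl⟩
      exact AffineSubspace.ext_of_direction_eq hdir ⟨p₂, hmem, hp₂⟩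
    · -- nondegenerate parallel case : slice along w
      have hnw : ⟪p₂ - p₁, w⟫ = ‖w‖ ^ 2 := by
        have hrw : p₂ - p₁ = w + ⟪p₂ - p₁, u₁⟫ • u₁ := by rw [hwdef]; abel
        have hu₁w : ⟪u₁, w⟫ = 0 := by rw [real_inner_comm]; exact hwu₁
        rw [hrw, inner_add_left, real_inner_smul_left, hu₁w, real_inner_self_eq_norm_sq]
        ring
      apply slice_null hSmeas hw
      intro a
      have hdiff : ⟪a - p₁, w⟫ - ⟪a - p₂, w⟫ = ‖w‖ ^ 2 := by
        rw [← inner_sub_left, show a - p₁ - (a - p₂) = p₂ - p₁ from by abel, hnw]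
      refine (finite_linear (c₀ := (‖a - p₁‖ ^ 2 - ⟪a - p₁, u₁⟫ ^ 2)
          - (‖a - p₂‖ ^ 2 - ⟪a - p₂, u₂⟫ ^ 2)) (c₁ := 2 * ‖w‖ ^ 2) ?_).subset ?_
      · have : ‖w‖ ≠ 0 := norm_ne_zero_iff.mpr hw
        positivity
      · intro t ht
        have h0 := hgzero _ ht
        rw [g_expand p₁ u₁ p₂ u₂ a w t] at h0
        show ((‖a - p₁‖ ^ 2 - ⟪a - p₁, u₁⟫ ^ 2)
          - (‖a - p₂‖ ^ 2 - ⟪a - p₂, u₂⟫ ^ 2)) + t * (2 * ‖w‖ ^ 2) = 0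
        rw [hwu₁, hwu₂] at h0
        linear_combination h0 - 2 * t * hdiff
  · -- skew / intersecting case : slice along u₂
    have hu₂span : u₂ ∉ Submodule.span ℝ {u₁} := by
      intro hmem
      apply hdir
      rw [hdir₁, hdir₂]
      refine (Submodule.eq_of_le_of_finrank_eq ?_ ?_).symm
      · rw [Submodule.span_le, Set.singleton_subset_iff]; exact hmem
      · rw [finrank_span_singleton hu₂ne, finrank_span_singleton hu₁ne]
    have hne₁ : u₂ ≠ u₁ := fun h =>
      hu₂span (by rw [h]; exact Submodule.mem_span_singleton_self u₁)
    have hne₂ : u₂ ≠ -u₁ := fun h =>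
      hu₂span (by rw [h]; exact Submodule.neg_mem _ (Submodule.mem_span_singleton_self u₁))
    have hlt : ⟪u₂, u₁⟫ < 1 := (inner_lt_one_iff_real_of_norm_eq_one hu₂ hu₁).mpr hne₁
    have hgt : -1 < ⟪u₂, u₁⟫ := by
      have h' : ⟪u₂, -u₁⟫ < 1 :=
        (inner_lt_one_iff_real_of_norm_eq_one hu₂ (by rw [norm_neg, hu₁])).mpr hne₂
      rw [inner_neg_right] at h'
      linarith
    have hself : ⟪u₂, u₂⟫ = 1 := by
      rw [real_inner_self_eq_norm_sq, hu₂]; norm_num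
    have hC₂ : ⟪u₂, u₂⟫ ^ 2 - ⟪u₂, u₁⟫ ^ 2 ≠ 0 := by
      rw [hself]
      nlinarith
    apply slice_null hSmeas hu₂ne
    intro a
    refine (finite_quad (c₀ := (‖a - p₁‖ ^ 2 - ⟪a - p₁, u₁⟫ ^ 2)
        - (‖a - p₂‖ ^ 2 - ⟪a - p₂, u₂⟫ ^ 2))
      (c₁ := 2 * ⟪a - p₁, u₂⟫ - 2 * ⟪a - p₂, u₂⟫
          - 2 * ⟪a - p₁, u₁⟫ * ⟪u₂, u₁⟫ + 2 * ⟪a - p₂, u₂⟫ * ⟪u₂, u₂⟫)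
      (c₂ := ⟪u₂, u₂⟫ ^ 2 - ⟪u₂, u₁⟫ ^ 2) hC₂).subset ?_
    intro t ht
    have h0 := hgzero _ ht
    rw [g_expand p₁ u₁ p₂ u₂ a u₂ t] at h0
    exact h0
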